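/- Let (u, v, pu, pv) solve the FLRW null geodesic system on [s₁,S) with angular momentum L ≥ 0, with pv > 0 on [s₁,S) and with the mass shell relation 4t²r²·pu·pv = L² holding on [s₁,S). Then (r²·pu/pv)' = −4·r·pu²/pv ≤ 0 on [s₁,S); consequently r(s)²·pu(s)/pv(s) ≤ r(s₁)²·pu(s₁)/pv(s₁) for all s ∈ [s₁,S), and if in addition pu(s₁) ≤ pv(s₁), then r(s)²·pu(s) ≤ r(s₁)²·pv(s) for all s ∈ [s₁,S). -/

import Mathlib

/-- The time coordinate `t = (v+u)²/4` along a curve in double null coordinates. -/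
noncomputable def tOf (u v : ℝ → ℝ) (s : ℝ) : ℝ := (v s + u s) ^ 2 / 4

/-- The radial coordinate `r = v − u` along a curve in double null coordinates. -/
noncomputable def rOf (u v : ℝ → ℝ) (s : ℝ) : ℝ := v s - u s

/-- **The FLRW null geodesic system** with angular momentum `L` on a set `I ⊆ ℝ`:
`u' = pu`, `v' = pv`,
`pu' = −t^{−1/2}·pu² − (1/2)(1/(2t^{1/2}) + 1/r)·L²/(t²r²)`,
`pv' = −t^{−1/2}·pv² − (1/2)(1/(2t^{1/2}) − 1/r)·L²/(t²r²)`,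
where `t = (v+u)²/4` and `r = v−u` are required to satisfy `v+u > 0`, `r > 0` on `I`,
and `pu ≥ 0`, `pv ≥ 0` on `I`. -/
def FLRWGeodesicSystem (I : Set ℝ) (L : ℝ) (u v pu pv : ℝ → ℝ) : Prop :=
  (∀ s ∈ I, 0 < v s + u s) ∧
  (∀ s ∈ I, 0 < rOf u v s) ∧
  (∀ s ∈ I, 0 ≤ pu s) ∧
  (∀ s ∈ I, 0 ≤ pv s) ∧
  (∀ s ∈ I, HasDerivAt u (pu s) s) ∧
  (∀ s ∈ I, HasDerivAt v (pv s) s) ∧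
  (∀ s ∈ I, HasDerivAt pu
    (-(pu s) ^ 2 / Real.sqrt (tOf u v s)
      - 1 / 2 * (1 / (2 * Real.sqrt (tOf u v s)) + 1 / rOf u v s) * L ^ 2
          / ((tOf u v s) ^ 2 * (rOf u v s) ^ 2)) s) ∧
  (∀ s ∈ I, HasDerivAt pv
    (-(pv s) ^ 2 / Real.sqrt (tOf u v s)
      - 1 / 2 * (1 / (2 * Real.sqrt (tOf u v s)) - 1 / rOf u v s) * L ^ 2
          / ((tOf u v s) ^ 2 * (rOf u v s) ^ 2)) s)

open Set

/-- **Monotonicity of `r²·pu/pv` along FLRW null geodesics.**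
Let `(u,v,pu,pv)` solve the FLRW null geodesic system on `[s₁,S)` with angular momentum
`L ≥ 0`, with `pv > 0` and the mass shell relation `4t²r²·pu·pv = L²` on `[s₁,S)`.
Then `(r²·pu/pv)' = −4r·pu²/pv ≤ 0`; consequently
`r(s)²pu(s)/pv(s) ≤ r(s₁)²pu(s₁)/pv(s₁)` for all `s`, and if moreover
`pu(s₁) ≤ pv(s₁)`, then `r(s)²pu(s) ≤ r(s₁)²pv(s)` for all `s`. -/
theorem flrw_geodesic_r2pupv_monotone (s₁ S L : ℝ) (hs₁S : s₁ < S) (hL : 0 ≤ L)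
    (u v pu pv : ℝ → ℝ)
    (hsys : FLRWGeodesicSystem (Ico s₁ S) L u v pu pv)
    (hpv : ∀ s ∈ Ico s₁ S, 0 < pv s)
    (hms : ∀ s ∈ Ico s₁ S,
      4 * (tOf u v s) ^ 2 * (rOf u v s) ^ 2 * pu s * pv s = L ^ 2) :
    (∀ s ∈ Ico s₁ S,
      HasDerivAt (fun s' => (rOf u v s') ^ 2 * pu s' / pv s')
        (-(4 * rOf u v s * (pu s) ^ 2 / pv s)) s ∧
      -(4 * rOf u v s * (pu s) ^ 2 / pv s) ≤ 0) ∧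
    (∀ s ∈ Ico s₁ S,
      (rOf u v s) ^ 2 * pu s / pv s ≤ (rOf u v s₁) ^ 2 * pu s₁ / pv s₁) ∧
    (pu s₁ ≤ pv s₁ →
      ∀ s ∈ Ico s₁ S, (rOf u v s) ^ 2 * pu s ≤ (rOf u v s₁) ^ 2 * pv s) := by
  obtain ⟨hvu, hr, hpu0, hpv0, hu', hv', hpu', hpv'⟩ := hsys
  have hderiv : ∀ s ∈ Ico s₁ S,
      HasDerivAt (fun s' => (rOf u v s') ^ 2 * pu s' / pv s')
        (-(4 * rOf u v s * (pu s) ^ 2 / pv s)) s := by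
    intro s hs
    have hrpos := hr s hs
    have hpvpos := hpv s hs
    have htpos : 0 < tOf u v s := by
      have := hvu s hs
      unfold tOf; positivity
    have hstpos : 0 < Real.sqrt (tOf u v s) := Real.sqrt_pos.mpr htpos
    have hR : HasDerivAt (fun s' => rOf u v s') (pv s - pu s) s := by
      exact (hv' s hs).sub (hu' s hs)
    have H := (((hR.pow 2).mul (hpu' s hs)).div (hpv' s hs) hpvpos.ne')
    refine H.congr_deriv ?_
    simp only [Pi.pow_apply, Pi.mul_apply]
    rw [← hms s hs]
    field_simp
    ring
  have hnonpos : ∀ s ∈ Ico s₁ S, -(4 * rOf u v s * (pu s) ^ 2 / pv s) ≤ 0 := by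
    intro s hs
    have := hr s hs
    have := hpv s hs
    have h : 0 ≤ 4 * rOf u v s * (pu s) ^ 2 / pv s := by positivity
    linarith
  have hmem₁ : s₁ ∈ Ico s₁ S := ⟨le_refl _, hs₁S⟩
  have hAnti : AntitoneOn (fun s' => (rOf u v s') ^ 2 * pu s' / pv s') (Ico s₁ S) := by
    apply antitoneOn_of_deriv_nonpos (convex_Ico s₁ S)
    · intro x hx
      exact (hderiv x hx).continuousAt.continuousWithinAt
    · intro x hx
      rw [interior_Ico] at hx
      exact ((hderiv x (Ioo_subset_Ico_self hx)).differentiableAt).differentiableWithinAt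
    · intro x hx
      rw [interior_Ico] at hx
      have hx' : x ∈ Ico s₁ S := Ioo_subset_Ico_self hx
      rw [(hderiv x hx').deriv]
      exact hnonpos x hx'
  have hmono : ∀ s ∈ Ico s₁ S,
      (rOf u v s) ^ 2 * pu s / pv s ≤ (rOf u v s₁) ^ 2 * pu s₁ / pv s₁ :=
    fun s hs => hAnti hmem₁ hs hs.1
  refine ⟨fun s hs => ⟨hderiv s hs, hnonpos s hs⟩, hmono, ?_⟩
  intro hpuv s hs
  have hpv₁ := hpv s₁ hmem₁
  have hpvs := hpv s hs
  have hstep : (rOf u v s₁) ^ 2 * pu s₁ / pv s₁ ≤ (rOf u v s₁) ^ 2 := by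
    rw [div_le_iff₀ hpv₁]
    have := sq_nonneg (rOf u v s₁)
    nlinarith
  have h2 : (rOf u v s) ^ 2 * pu s / pv s ≤ (rOf u v s₁) ^ 2 := (hmono s hs).trans hstep
  calc (rOf u v s) ^ 2 * pu s = (rOf u v s) ^ 2 * pu s / pv s * pv s := by
        field_simp
    _ ≤ (rOf u v s₁) ^ 2 * pv s := by
        exact mul_le_mul_of_nonneg_right h2 hpvs.le
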